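/- In the instance constructed from a graph H with n = |V(H)| divisible by 3 as follows — G' is the subdivision of H with every subdivision vertex occupied by an edge-guard inhabitant with upper-bound 1; G_1, G_2, G_3 are three disjoint copies of G' with v^i denoting the copy of v ∈ V(H) in G_i; for each i ∈ {1,2,3} a vertex g_i adjacent to all v^i (v ∈ V(H)) is occupied by a size-guard inhabitant with upper-bound n/3; for each v ∈ V(H) a vertex g_v adjacent exactly to v^1, v^2, v^3 is occupied by a vertex-guard inhabitant with upper-bound 1; all copies of original vertices are empty; R = n — the following holds: for every inhabitants-respecting housing π of size n and every vertex v_i ∈ V(H), exactly one of the three copies v_i^1, v_i^2, v_i^3 belongs to π, i.e., |π ∩ {v_i^1, v_i^2, v_i^3}| = 1. -/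

import Mathlib

/-- In the instance constructed from `H` for the
Equitable-3-Colouring reduction (same encoding as in Statement 12:
`Sum.inl (i, Sum.inl v)` is the empty copy `v^i`, `Sum.inl (i, Sum.inr e)`
the edge-guard vertex `w_e^i` with upper-bound `1`, `Sum.inr (Sum.inl i)`
the size-guard vertex `g_i` with upper-bound `n/3`, and `Sum.inr (Sum.inr v)`
the vertex-guard vertex `g_v` with upper-bound `1`; `R = n = |V(H)|`,
divisible by 3), every inhabitants-respecting housing `π` of size `n`
contains exactly one of the three copies `v^1, v^2, v^3` of each original
vertex `v`. -/
theorem equitable_reduction_exactly_one_copy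
    {W : Type*} [Fintype W] [DecidableEq W]
    (H : SimpleGraph W) [DecidableRel H.Adj]
    (hdvd : 3 ∣ Fintype.card W)
    (G : SimpleGraph ((Fin 3 × (W ⊕ ↥H.edgeSet)) ⊕ (Fin 3 ⊕ W)))
    [DecidableRel G.Adj]
    (hadj : ∀ x y, G.Adj x y ↔
      (∃ (i : Fin 3) (v : W) (e : H.edgeSet), v ∈ (e : Sym2 W) ∧
        ((x = Sum.inl (i, Sum.inl v) ∧ y = Sum.inl (i, Sum.inr e)) ∨
         (x = Sum.inl (i, Sum.inr e) ∧ y = Sum.inl (i, Sum.inl v)))) ∨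
      (∃ (i : Fin 3) (v : W),
        ((x = Sum.inr (Sum.inl i) ∧ y = Sum.inl (i, Sum.inl v)) ∨
         (x = Sum.inl (i, Sum.inl v) ∧ y = Sum.inr (Sum.inl i)))) ∨
      (∃ (i : Fin 3) (v : W),
        ((x = Sum.inr (Sum.inr v) ∧ y = Sum.inl (i, Sum.inl v)) ∨
         (x = Sum.inl (i, Sum.inl v) ∧ y = Sum.inr (Sum.inr v))))) :
    ∀ π : Finset ((Fin 3 × (W ⊕ ↥H.edgeSet)) ⊕ (Fin 3 ⊕ W)),
      (∀ x ∈ π, ∃ (i : Fin 3) (v : W), x = Sum.inl (i, Sum.inl v)) →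
      π.card = Fintype.card W →
      (∀ (i : Fin 3) (e : H.edgeSet),
        (π.filter (fun x => G.Adj (Sum.inl (i, Sum.inr e)) x)).card ≤ 1) →
      (∀ i : Fin 3,
        (π.filter (fun x => G.Adj (Sum.inr (Sum.inl i)) x)).card ≤
          Fintype.card W / 3) →
      (∀ v : W,
        (π.filter (fun x => G.Adj (Sum.inr (Sum.inr v)) x)).card ≤ 1) →
      ∀ v : W,
        (π.filter (fun x => ∃ i : Fin 3, x = Sum.inl (i, Sum.inl v))).card = 1 := by
  intro π hπ hcard _ _ hvg v
  classical
  -- adjacency to the vertex-guard g_w characterizes copies of w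
  have hadjv : ∀ (w : W) x, G.Adj (Sum.inr (Sum.inr w)) x ↔
      ∃ i : Fin 3, x = Sum.inl (i, Sum.inl w) := by
    intro w x
    rw [hadj]
    constructor
    · rintro (⟨i, u, e, -, ⟨h1, -⟩ | ⟨h1, -⟩⟩ | ⟨i, u, ⟨h1, -⟩ | ⟨h1, -⟩⟩ |
        ⟨i, u, ⟨h1, h2⟩ | ⟨h1, -⟩⟩)
      · exact nomatch h1
      · exact nomatch h1
      · injection h1 with h; exact nomatch h
      · exact nomatch h1
      · injection h1 with h; injection h with h'; subst h'; exact ⟨i, h2⟩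
      · exact nomatch h1
    · rintro ⟨i, rfl⟩
      exact Or.inr (Or.inr ⟨i, w, Or.inl ⟨rfl, rfl⟩⟩)
  set key : (Fin 3 × (W ⊕ ↥H.edgeSet)) ⊕ (Fin 3 ⊕ W) → W := fun x =>
    match x with
    | Sum.inl (_, Sum.inl w) => w
    | _ => v with hkey
  have hfib : ∀ w : W,
      π.filter (fun x => ∃ i : Fin 3, x = Sum.inl (i, Sum.inl w)) =
      π.filter (fun x => key x = w) := by
    intro w
    apply Finset.filter_congr
    intro x hx
    obtain ⟨i, u, rfl⟩ := hπ x hx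
    simp [hkey]
  have hsum : ∑ w : W, (π.filter (fun x => key x = w)).card = π.card :=
    (Finset.card_eq_sum_card_fiberwise (fun x _ => Finset.mem_univ (key x))).symm
  have hle : ∀ w : W, (π.filter (fun x => key x = w)).card ≤ 1 := by
    intro w
    rw [← hfib]
    have heq : π.filter (fun x => ∃ i : Fin 3, x = Sum.inl (i, Sum.inl w)) =
        π.filter (fun x => G.Adj (Sum.inr (Sum.inr w)) x) :=
      Finset.filter_congr fun x _ => (hadjv w x).symm
    rw [heq]
    exact hvg w
  rw [hfib]
  by_contra hne
  have h0 : (π.filter (fun x => key x = v)).card = 0 := by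
    have := hle v; omega
  have hlt : ∑ w : W, (π.filter (fun x => key x = w)).card <
      ∑ _w : W, 1 := by
    apply Finset.sum_lt_sum (fun w _ => hle w)
    exact ⟨v, Finset.mem_univ v, by omega⟩
  simp only [Finset.sum_const, smul_eq_mul, mul_one, Finset.card_univ] at hlt
  omega
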